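/- If a function u(t,x,y) satisfies u_t - u_xx + u·u_y = u², then the function ū defined by ū(t,x,ȳ) := e^{-y}·u(t,x,y) where ȳ = -e^{-y} (i.e., ū(t,x,ȳ) = (-ȳ)·u(t,x,-ln(-ȳ)) for ȳ < 0) satisfies ū_t - ū_xx + ū·ū_{ȳ} = 0 on the region ȳ < 0. -/

import Mathlib

/-- If a C² function `u(t,x,y)` satisfies `u_t - u_xx + u·u_y = u²`,
then `ū(t,x,yb) := (-yb)·u(t,x,-ln(-yb))` (corresponding to `yb = -e^{-y}`,
`ū = e^{-y}u`) satisfies `ū_t - ū_xx + ū·ū_yb = 0` on the region `yb < 0`. -/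
theorem stmt_8
    (u : ℝ × ℝ × ℝ → ℝ) (hu : ContDiff ℝ 2 u)
    (hpde : ∀ t x y : ℝ,
      deriv (fun s => u (s, x, y)) t
        - deriv (fun s => deriv (fun r => u (t, r, y)) s) x
        + u (t, x, y) * deriv (fun s => u (t, x, s)) y = u (t, x, y) ^ 2)
    (v : ℝ × ℝ × ℝ → ℝ)
    (hv : v = fun p => (-p.2.2) * u (p.1, p.2.1, -Real.log (-p.2.2))) :
    ∀ t x yb : ℝ, yb < 0 →
      deriv (fun s => v (s, x, yb)) t
        - deriv (fun s => deriv (fun r => v (t, r, yb)) s) x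
        + v (t, x, yb) * deriv (fun s => v (t, x, s)) yb = 0 := by
  subst hv
  intro t x yb hyb
  have hyb' : yb ≠ 0 := ne_of_lt hyb
  set y : ℝ := -Real.log (-yb) with hy
  -- differentiability of u in the third variable
  have hg : Differentiable ℝ (fun s => u (t, x, s)) := by
    have h1 : Differentiable ℝ (fun s : ℝ => ((t, x, s) : ℝ × ℝ × ℝ)) := by
      fun_prop
    exact (hu.differentiable (by norm_num)).comp h1
  -- derivative of the inner change of variables
  have hlog : HasDerivAt (fun s : ℝ => -Real.log (-s)) (-(1 / yb)) yb := by
    have h1 : HasDerivAt (fun s : ℝ => -s) (-1) yb := (hasDerivAt_id yb).neg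
    have h2 : HasDerivAt Real.log (-yb)⁻¹ (-yb) :=
      Real.hasDerivAt_log (neg_ne_zero.mpr hyb')
    have h3 : HasDerivAt (fun s : ℝ => -Real.log (-s)) (-((-yb)⁻¹ * -1)) yb := (h2.comp yb h1).neg
    convert h3 using 1
    ring
  have hc : HasDerivAt (fun s : ℝ => u (t, x, -Real.log (-s)))
      (deriv (fun s => u (t, x, s)) y * -(1 / yb)) yb := by
    have := ((hg y).hasDerivAt).comp yb hlog
    simpa [hy, Function.comp_def] using this
  have hmul : HasDerivAt (fun s : ℝ => (-s) * u (t, x, -Real.log (-s)))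
      ((-1) * u (t, x, y) + (-yb) * (deriv (fun s => u (t, x, s)) y * -(1 / yb))) yb :=
    ((hasDerivAt_id yb).neg.mul hc)
  have e3 : deriv (fun s => (fun p : ℝ × ℝ × ℝ => (-p.2.2) * u (p.1, p.2.1, -Real.log (-p.2.2))) (t, x, s)) yb
      = (-1) * u (t, x, y) + (-yb) * (deriv (fun s => u (t, x, s)) y * -(1 / yb)) :=
    hmul.deriv
  have e1 : deriv (fun s => (fun p : ℝ × ℝ × ℝ => (-p.2.2) * u (p.1, p.2.1, -Real.log (-p.2.2))) (s, x, yb)) t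
      = (-yb) * deriv (fun s => u (s, x, y)) t := by
    simp only
    rw [deriv_const_mul_field]
  have e2 : deriv (fun s => deriv (fun r => (fun p : ℝ × ℝ × ℝ => (-p.2.2) * u (p.1, p.2.1, -Real.log (-p.2.2))) (t, r, yb)) s) x
      = (-yb) * deriv (fun s => deriv (fun r => u (t, r, y)) s) x := by
    simp only [deriv_const_mul_field]
    rfl
  rw [e1, e2, e3]
  simp only
  have hp := hpde t x y
  have h4 : -yb * (deriv (fun s => u (t, x, s)) y * -(1 / yb))
      = deriv (fun s => u (t, x, s)) y := by
    field_simp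
  rw [← hy, h4]
  linear_combination (-yb) * hp
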